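/- The bound 1/(n+m−1) of the archipelago division is tight: for every n ≥ 1 and m ≥ 1 there exist m pairwise-disjoint islands and n identical measures (each agent values islands Z_1,...,Z_{m−1} as 1 each and island Z_m as n), such that in every allocation where each agent's piece is contained in a single island, some agent receives value at most 1 = V(C)/(n+m−1). -/

import Mathlib

open MeasureTheory

/-- Tightness of the `1/(n+m-1)` archipelago bound: for every `n ≥ 1` and `m ≥ 1` there
exist `m` pairwise-disjoint islands and a common measure valuing each of the first `m-1`
islands as `1` and the last island as `n`, such that in every allocation of
pairwise-disjoint pieces, each contained in a single island, some agent gets value at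
most `1 = V(C)/(n+m-1)`. -/
theorem archipelago_bound_tight (n m : ℕ) (hn : 0 < n) (hm : 0 < m) :
    ∃ (Z : Fin m → Set ℝ) (V : Measure ℝ),
      (∀ j, MeasurableSet (Z j)) ∧
      Pairwise (Function.onFun Disjoint Z) ∧
      (∀ j : Fin m, (j : ℕ) < m - 1 → (V (Z j)).toReal = 1) ∧
      (V (Z ⟨m - 1, Nat.sub_lt hm one_pos⟩)).toReal = n ∧
      ∀ X : Fin n → Set ℝ,
        (∀ i, MeasurableSet (X i)) →
        Pairwise (Function.onFun Disjoint X) →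
        (∀ i, ∃ j, X i ⊆ Z j) →
        ∃ i, (V (X i)).toReal ≤ 1 := by
  set Z : Fin m → Set ℝ := fun j => Set.Ico (j : ℝ) (j + 1) with hZ
  set V : Measure ℝ := volume.restrict (Set.Ico 0 ((m : ℝ) - 1))
      + (n : ENNReal) • volume.restrict (Set.Ico ((m : ℝ) - 1) m) with hV
  have hmZ : ∀ j, MeasurableSet (Z j) := fun j => measurableSet_Ico
  have hVapp : ∀ s : Set ℝ, MeasurableSet s →
      V s = volume (s ∩ Set.Ico 0 ((m : ℝ) - 1))
          + n * volume (s ∩ Set.Ico ((m : ℝ) - 1) m) := by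
    intro s hs
    simp [hV, Measure.restrict_apply hs]
  -- value of early islands
  have hearly : ∀ j : Fin m, (j : ℕ) < m - 1 → V (Z j) = 1 := by
    intro j hj
    have hj' : (j : ℝ) + 1 ≤ (m : ℝ) - 1 := by
      have : ((j : ℕ) : ℝ) + 1 ≤ ((m : ℕ) : ℝ) - 1 := by
        have h1 : (j : ℕ) + 1 ≤ m - 1 := hj
        have h2 : ((j : ℕ) + 1 : ℝ) ≤ ((m - 1 : ℕ) : ℝ) := by exact_mod_cast h1
        have h3 : ((m - 1 : ℕ) : ℝ) = (m : ℝ) - 1 := by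
          rw [Nat.cast_sub (show 1 ≤ m by omega)]; simp
        linarith [h2, h3.le]
      simpa using this
    rw [hVapp _ (hmZ j)]
    have h1 : Z j ∩ Set.Ico 0 ((m : ℝ) - 1) = Z j := by
      apply Set.inter_eq_left.mpr
      apply Set.Ico_subset_Ico (by positivity) hj'
    have h2 : Z j ∩ Set.Ico ((m : ℝ) - 1) (m : ℝ) = ∅ := by
      rw [hZ]
      simp only [Set.Ico_inter_Ico]
      apply Set.Ico_eq_empty
      intro h
      have := lt_of_le_of_lt (le_max_right (j : ℝ) ((m:ℝ)-1)) h
      have := lt_of_lt_of_le this (min_le_left _ _)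
      linarith
    rw [h1, h2]
    simp [hZ, Real.volume_Ico]
  have hmlast : ((⟨m - 1, Nat.sub_lt hm one_pos⟩ : Fin m) : ℝ) = (m : ℝ) - 1 := by
    simp only [Fin.val_mk]
    rw [Nat.cast_sub (show 1 ≤ m by omega)]; simp
  have hlastset : Z ⟨m - 1, Nat.sub_lt hm one_pos⟩ = Set.Ico ((m : ℝ) - 1) (m : ℝ) := by
    rw [hZ]
    simp only
    rw [hmlast]
    ring_nf
  have hlast : V (Z ⟨m - 1, Nat.sub_lt hm one_pos⟩) = n := by
    rw [hVapp _ (hmZ _), hlastset]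
    have h1 : Set.Ico ((m : ℝ) - 1) (m : ℝ) ∩ Set.Ico 0 ((m : ℝ) - 1) = ∅ := by
      simp only [Set.Ico_inter_Ico]
      apply Set.Ico_eq_empty
      intro h
      have h1 := lt_of_le_of_lt (le_max_left ((m:ℝ)-1) 0) h
      have h2 := lt_of_lt_of_le h1 (min_le_right _ _)
      exact absurd h2 (lt_irrefl _)
    rw [h1, Set.inter_self]
    rw [Real.volume_Ico]
    simp
  refine ⟨Z, V, hmZ, ?_, ?_, ?_, ?_⟩
  · -- pairwise disjoint islands
    intro i j hij
    have hij' : (i : ℕ) ≠ (j : ℕ) := fun h => hij (Fin.ext h)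
    simp only [Function.onFun, hZ]
    rw [Set.Ico_disjoint_Ico]
    rcases lt_or_gt_of_ne hij' with h | h
    · have : (i : ℝ) + 1 ≤ (j : ℝ) := by exact_mod_cast h
      calc min ((i:ℝ)+1) ((j:ℝ)+1) ≤ (i:ℝ)+1 := min_le_left _ _
        _ ≤ (j:ℝ) := this
        _ ≤ max (i:ℝ) (j:ℝ) := le_max_right _ _
    · have : (j : ℝ) + 1 ≤ (i : ℝ) := by exact_mod_cast h
      calc min ((i:ℝ)+1) ((j:ℝ)+1) ≤ (j:ℝ)+1 := min_le_right _ _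
        _ ≤ (i:ℝ) := this
        _ ≤ max (i:ℝ) (j:ℝ) := le_max_left _ _
  · intro j hj
    rw [hearly j hj]; simp
  · rw [hlast]; simp
  · intro X hmX hdX hsub
    by_cases hex : ∃ i, ∃ j : Fin m, (j : ℕ) < m - 1 ∧ X i ⊆ Z j
    · obtain ⟨i, j, hj, hsubj⟩ := hex
      refine ⟨i, ?_⟩
      have hle : V (X i) ≤ V (Z j) := measure_mono hsubj
      rw [hearly j hj] at hle
      calc (V (X i)).toReal ≤ (1 : ENNReal).toReal := ENNReal.toReal_mono (by simp) hle
        _ = 1 := by simp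
    · -- every piece lies in the last island
      push_neg at hex
      have hall : ∀ i, X i ⊆ Z ⟨m - 1, Nat.sub_lt hm one_pos⟩ := by
        intro i
        obtain ⟨j, hsubj⟩ := hsub i
        by_cases hj : (j : ℕ) < m - 1
        · exact absurd hsubj (hex i j hj)
        · have hj' : (j : ℕ) = m - 1 := by
            have := j.isLt
            omega
          have : j = ⟨m - 1, Nat.sub_lt hm one_pos⟩ := Fin.ext hj'
          rwa [this] at hsubj
      -- total value at most n
      have hsum : ∑ i, V (X i) ≤ (n : ENNReal) := by
        rw [← tsum_fintype (L := SummationFilter.unconditional _), ← measure_iUnion hdX hmX]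
        rw [← hlast]
        exact measure_mono (Set.iUnion_subset hall)
      -- finiteness
      have hfin : ∀ i, V (X i) ≠ ⊤ := by
        intro i
        have : V (X i) ≤ (n : ENNReal) := le_trans (Finset.single_le_sum (f := fun i => V (X i)) (fun _ _ => zero_le) (Finset.mem_univ i)) hsum
        exact ne_top_of_le_ne_top (by simp) this
      by_contra hcon
      push_neg at hcon
      have hstrict : (n : ℝ) < ∑ i, (V (X i)).toReal := by
        have : ∑ i : Fin n, (1 : ℝ) < ∑ i, (V (X i)).toReal := by
          apply Finset.sum_lt_sum_of_nonempty
          · exact Finset.univ_nonempty_iff.mpr (Fin.pos_iff_nonempty.mp hn)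
          · intro i _; exact hcon i
        simpa using this
      have hsumr : ∑ i, (V (X i)).toReal ≤ (n : ℝ) := by
        have := ENNReal.toReal_mono (by simp) hsum
        rw [ENNReal.toReal_sum (fun i _ => hfin i)] at this
        simpa using this
      linarith
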